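/- arXiv:1910.05936 — 6 statements merged into one kernel-verified Lean document; each statement's English description precedes it below -/
import Mathlib

section
/- Let n be a positive integer and let G = {(i_1,j_1), (i_2,j_2), …, (i_n,j_n)} be a subset of cardinality n of the index set {(i,j) : 1 ≤ i ≤ j ≤ n}. Then G is a generating index set of ST(n) if and only if det(M_G) is odd, where M_G is the n×n integer matrix whose (k,l)-entry is the binomial coefficient C(i_k - 1, j_k - l), with the convention C(a,b) = 0 whenever b < 0 or b > a. -/
open Finset

namespace Steinhaus

/-- Extended binomial coefficient `C(a,b)` for integers `a`, `b`:
`C(a,0) = 1`, `C(0,b) = 0` for `b > 0`, Pascal's rule everywhere; in particular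
`C(a,b) = 0` for `b < 0` and `C(a,b) = (-1)^b C(b-a-1,b)` for `a < 0 ≤ b`. -/
def ibinom (a b : ℤ) : ℤ :=
  if b < 0 then 0
  else if 0 ≤ a then (a.toNat.choose b.toNat : ℤ)
  else (-1) ^ b.toNat * ((b - a - 1).toNat.choose b.toNat : ℤ)

/-- `(i,j)` is an index of the triangle of size `n`, i.e. `1 ≤ i ≤ j ≤ n`. -/
def InTri (n i j : ℕ) : Prop := 1 ≤ i ∧ i ≤ j ∧ j ≤ n

instance (n i j : ℕ) : Decidable (InTri n i j) :=
  inferInstanceAs (Decidable (1 ≤ i ∧ i ≤ j ∧ j ≤ n))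

/-- The `ZMod 2`-vector space of binary Steinhaus triangles of size `n`,
realized as functions `ℕ → ℕ → ZMod 2` vanishing outside the triangle
`{(i,j) | 1 ≤ i ≤ j ≤ n}` and satisfying the local rule
`a i j = a (i-1) (j-1) + a (i-1) j` inside it. -/
def ST (n : ℕ) : Submodule (ZMod 2) (ℕ → ℕ → ZMod 2) where
  carrier := {a | (∀ i j, ¬ InTri n i j → a i j = 0) ∧
    ∀ i j, 2 ≤ i → i ≤ j → j ≤ n → a i j = a (i - 1) (j - 1) + a (i - 1) j}
  add_mem' := by
    rintro a b ⟨ha0, ha1⟩ ⟨hb0, hb1⟩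
    refine ⟨fun i j h => ?_, fun i j h2 hij hjn => ?_⟩
    · simp only [Pi.add_apply, ha0 i j h, hb0 i j h, add_zero]
    · simp only [Pi.add_apply, ha1 i j h2 hij hjn, hb1 i j h2 hij hjn]
      ring
  zero_mem' := ⟨fun _ _ _ => rfl, fun _ _ _ _ _ => by simp⟩
  smul_mem' := by
    rintro c a ⟨ha0, ha1⟩
    refine ⟨fun i j h => ?_, fun i j h2 hij hjn => ?_⟩
    · simp only [Pi.smul_apply, ha0 i j h, smul_zero]
    · simp only [Pi.smul_apply, ha1 i j h2 hij hjn, smul_add]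

/-- The first row of the triangle `a` (of size `n`) is the sequence `S`;
equivalently, `a = ∇S`. -/
def FirstRow (n : ℕ) (a : ℕ → ℕ → ZMod 2) (S : ℕ → ZMod 2) : Prop :=
  ∀ j, 1 ≤ j → j ≤ n → a 1 j = S j

/-- The rotation `r` by 120 degrees: `r(a)_{i,j} = a_{j-i+1, n-i+1}`. -/
def rot (n : ℕ) (a : ℕ → ℕ → ZMod 2) : ℕ → ℕ → ZMod 2 :=
  fun i j => if InTri n i j then a (j - i + 1) (n - i + 1) else 0

/-- The horizontal reflection `h`: `h(a)_{i,j} = a_{i, n-j+i}`. -/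
def hrefl (n : ℕ) (a : ℕ → ℕ → ZMod 2) : ℕ → ℕ → ZMod 2 :=
  fun i j => if InTri n i j then a i (n - j + i) else 0

lemma rot_add (n : ℕ) (a b : ℕ → ℕ → ZMod 2) :
    rot n (a + b) = rot n a + rot n b := by
  funext i j
  simp only [rot, Pi.add_apply]
  split_ifs <;> simp

lemma rot_smul (n : ℕ) (c : ZMod 2) (a : ℕ → ℕ → ZMod 2) :
    rot n (c • a) = c • rot n a := by
  funext i j
  simp only [rot, Pi.smul_apply]
  split_ifs <;> simp

lemma hrefl_add (n : ℕ) (a b : ℕ → ℕ → ZMod 2) :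
    hrefl n (a + b) = hrefl n a + hrefl n b := by
  funext i j
  simp only [hrefl, Pi.add_apply]
  split_ifs <;> simp

lemma hrefl_smul (n : ℕ) (c : ZMod 2) (a : ℕ → ℕ → ZMod 2) :
    hrefl n (c • a) = c • hrefl n a := by
  funext i j
  simp only [hrefl, Pi.smul_apply]
  split_ifs <;> simp

/-- The linear map `ρ = r² + r + id`. -/
def rho (n : ℕ) (a : ℕ → ℕ → ZMod 2) : ℕ → ℕ → ZMod 2 :=
  rot n (rot n a) + rot n a + a

/-- The subspace of rotationally symmetric Steinhaus triangles (fixed by `r`). -/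
def RST (n : ℕ) : Submodule (ZMod 2) (ℕ → ℕ → ZMod 2) where
  carrier := {a | a ∈ ST n ∧ rot n a = a}
  add_mem' := by
    rintro a b ⟨ha, ha'⟩ ⟨hb, hb'⟩
    exact ⟨add_mem ha hb, by rw [rot_add, ha', hb']⟩
  zero_mem' := ⟨zero_mem _, by funext i j; simp [rot]⟩
  smul_mem' := by
    rintro c a ⟨ha, ha'⟩
    exact ⟨Submodule.smul_mem _ c ha, by rw [rot_smul, ha']⟩

/-- The subspace of horizontally symmetric Steinhaus triangles (fixed by `h`). -/
def HST (n : ℕ) : Submodule (ZMod 2) (ℕ → ℕ → ZMod 2) where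
  carrier := {a | a ∈ ST n ∧ hrefl n a = a}
  add_mem' := by
    rintro a b ⟨ha, ha'⟩ ⟨hb, hb'⟩
    exact ⟨add_mem ha hb, by rw [hrefl_add, ha', hb']⟩
  zero_mem' := ⟨zero_mem _, by funext i j; simp [hrefl]⟩
  smul_mem' := by
    rintro c a ⟨ha, ha'⟩
    exact ⟨Submodule.smul_mem _ c ha, by rw [hrefl_smul, ha']⟩

/-- The subspace of dihedrally symmetric Steinhaus triangles (fixed by `r` and `h`). -/
def DST (n : ℕ) : Submodule (ZMod 2) (ℕ → ℕ → ZMod 2) where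
  carrier := {a | a ∈ ST n ∧ rot n a = a ∧ hrefl n a = a}
  add_mem' := by
    rintro a b ⟨ha, ha', ha''⟩ ⟨hb, hb', hb''⟩
    exact ⟨add_mem ha hb, by rw [rot_add, ha', hb'], by rw [hrefl_add, ha'', hb'']⟩
  zero_mem' := ⟨zero_mem _, by funext i j; simp [rot], by funext i j; simp [hrefl]⟩
  smul_mem' := by
    rintro c a ⟨ha, ha', ha''⟩
    exact ⟨Submodule.smul_mem _ c ha, by rw [rot_smul, ha'],
      by rw [hrefl_smul, ha'']⟩

/-- `σ₂`: the sum of the first `n` terms of a sequence over `ZMod 2`. -/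
def seqSum (n : ℕ) (S : ℕ → ZMod 2) : ZMod 2 := ∑ j ∈ Finset.Icc 1 n, S j

/-- The subspace `DST₀(n)` of dihedrally symmetric Steinhaus triangles whose
first row has zero sum. -/
def DST0 (n : ℕ) : Submodule (ZMod 2) (ℕ → ℕ → ZMod 2) where
  carrier := {a | a ∈ DST n ∧ seqSum n (a 1) = 0}
  add_mem' := by
    rintro a b ⟨ha, ha'⟩ ⟨hb, hb'⟩
    refine ⟨add_mem ha hb, ?_⟩
    have h : seqSum n ((a + b) 1) = seqSum n (a 1) + seqSum n (b 1) := by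
      simp [seqSum, Finset.sum_add_distrib]
    rw [h, ha', hb', add_zero]
  zero_mem' := ⟨zero_mem _, by simp [seqSum]⟩
  smul_mem' := by
    rintro c a ⟨ha, ha'⟩
    refine ⟨Submodule.smul_mem _ c ha, ?_⟩
    have h : seqSum n ((c • a) 1) = c • seqSum n (a 1) := by
      simp [seqSum, smul_eq_mul, Finset.mul_sum]
    rw [h, ha', smul_zero]

/-- The derived sequence `∂S`. -/
def der (S : ℕ → ZMod 2) : ℕ → ZMod 2 := fun j => S j + S (j + 1)

/-- The antiderived sequence `∫_{i,x} S`, whose `j`-th term is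
`x + Σ_{k=1}^{i-1} S k + Σ_{k=1}^{j-1} S k`. -/
def antider (i : ℕ) (x : ZMod 2) (S : ℕ → ZMod 2) : ℕ → ZMod 2 :=
  fun j => x + (∑ k ∈ Finset.Ico 1 i, S k) + (∑ k ∈ Finset.Ico 1 j, S k)

/-- A sequence of length `n` is symmetric. -/
def SymmSeq (n : ℕ) (S : ℕ → ZMod 2) : Prop :=
  ∀ j, 1 ≤ j → j ≤ n → S (n - j + 1) = S j

/-- The binomial sequence `bs(k,l)` whose `j`-th term is `C(l+j-1, k) mod 2`. -/
def bseq (k l : ℤ) : ℕ → ZMod 2 := fun j => ((ibinom (l + (j : ℤ) - 1) k : ℤ) : ZMod 2)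

/-- The map `H : ST(n) → ST(n-3)` removing the first row and the two sides. -/
def Hmap (n : ℕ) (a : ℕ → ℕ → ZMod 2) : ℕ → ℕ → ZMod 2 :=
  fun i j => if InTri (n - 3) i j then a (1 + i) (2 + j) else 0

/-- The projection `π_G` of a subspace `V` of triangles onto coordinates in `G`. -/
def proj (V : Submodule (ZMod 2) (ℕ → ℕ → ZMod 2)) (G : Set (ℕ × ℕ)) :
    V →ₗ[ZMod 2] (G → ZMod 2) where
  toFun a := fun p => (a : ℕ → ℕ → ZMod 2) p.1.1 p.1.2
  map_add' := fun _ _ => rfl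
  map_smul' := fun _ _ => rfl

/-- `G` is a generating index set of the subspace `V` of `ST(n)`:
`G` consists of triangle indices and `π_G : V → (ZMod 2)^G` is an isomorphism. -/
def IsGenIndexSet (n : ℕ) (V : Submodule (ZMod 2) (ℕ → ℕ → ZMod 2))
    (G : Set (ℕ × ℕ)) : Prop :=
  (∀ p ∈ G, InTri n p.1 p.2) ∧ Function.Bijective (proj V G)

end Steinhaus

namespace Steinhaus

lemma ibinom_pascal (a b : ℤ) (ha : 0 ≤ a) :
    ibinom (a + 1) b = ibinom a (b - 1) + ibinom a b := by
  unfold ibinom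
  rcases lt_trichotomy b 0 with h | h | h
  · rw [if_pos h, if_pos (by omega : b - 1 < 0), if_pos h]; ring
  · subst h
    rw [if_neg (by omega), if_pos (by omega), if_pos (by omega : (0:ℤ) - 1 < 0),
      if_neg (by omega), if_pos ha]
    simp
  · rw [if_neg (by omega), if_pos (by omega), if_neg (by omega), if_pos ha,
      if_neg (by omega), if_pos ha]
    have h1 : (a + 1).toNat = a.toNat + 1 := by omega
    have h2 : b.toNat = (b - 1).toNat + 1 := by omega
    rw [h1, h2, Nat.choose_succ_succ]
    push_cast; ring

lemma ibinom_zero (b : ℤ) : ibinom 0 b = if b = 0 then 1 else 0 := by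
  unfold ibinom
  rcases lt_trichotomy b 0 with h | h | h
  · rw [if_pos h, if_neg (by omega)]
  · subst h; simp
  · rw [if_neg (by omega), if_pos le_rfl, if_neg (by omega)]
    rw [Nat.choose_eq_zero_of_lt (by simpa using h)]
    simp

/-- The coefficient `C(i-1, j-l-1) mod 2`. -/
def coeff (i j l : ℕ) : ZMod 2 :=
  ((ibinom ((i : ℤ) - 1) ((j : ℤ) - ((l : ℤ) + 1)) : ℤ) : ZMod 2)

lemma coeff_pascal (i j l : ℕ) (hi : 2 ≤ i) (hj : 2 ≤ j) :
    coeff i j l = coeff (i - 1) (j - 1) l + coeff (i - 1) j l := by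
  unfold coeff
  have h1 : ((i - 1 : ℕ) : ℤ) = (i : ℤ) - 1 := by omega
  have h2 : ((j - 1 : ℕ) : ℤ) = (j : ℤ) - 1 := by omega
  rw [h1, h2]
  have : (i : ℤ) - 1 = ((i : ℤ) - 2) + 1 := by ring
  rw [this, ibinom_pascal _ _ (by omega)]
  push_cast
  ring_nf

lemma coeff_one (j l : ℕ) : coeff 1 j l = if j = l + 1 then 1 else 0 := by
  unfold coeff
  norm_num
  rw [ibinom_zero]
  split_ifs with h1 h2 h2
  · rfl
  · omega
  · omega
  · rfl

/-- The triangle generated by a first row `S`. -/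
def nabla (n : ℕ) (S : Fin n → ZMod 2) : ℕ → ℕ → ZMod 2 :=
  fun i j => if InTri n i j then ∑ l : Fin n, coeff i j (l : ℕ) * S l else 0

lemma expand (n : ℕ) (a : ℕ → ℕ → ZMod 2) (ha : a ∈ ST n) :
    ∀ i j, InTri n i j → a i j = ∑ l : Fin n, coeff i j (l : ℕ) * a 1 ((l : ℕ) + 1) := by
  obtain ⟨ha0, ha1⟩ := ha
  intro i
  induction i with
  | zero => intro j hj; exact absurd hj.1 (by omega)
  | succ i ih =>
    intro j hj
    obtain ⟨h1, h2, h3⟩ := hj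
    rcases Nat.eq_zero_or_pos i with hi0 | hi1
    · subst hi0
      have hjn : j - 1 < n := by omega
      rw [Finset.sum_eq_single (⟨j - 1, hjn⟩ : Fin n)]
      · rw [coeff_one]
        rw [if_pos (by simp; omega)]
        have : (j - 1 : ℕ) + 1 = j := by omega
        rw [this, one_mul]
      · intro l _ hl
        rw [coeff_one, if_neg, zero_mul]
        intro hc
        apply hl
        apply Fin.ext
        simp
        omega
      · intro h; exact absurd (Finset.mem_univ _) h
    · have hstep := ha1 (i + 1) j (by omega) h2 h3
      simp only [Nat.add_sub_cancel] at hstep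
      rw [hstep, ih (j - 1) ⟨hi1, by omega, by omega⟩, ih j ⟨hi1, by omega, h3⟩,
        ← Finset.sum_add_distrib]
      apply Finset.sum_congr rfl
      intro l _
      have hp := coeff_pascal (i + 1) j (l : ℕ) (by omega) (by omega)
      simp only [Nat.add_sub_cancel] at hp
      rw [hp]
      ring

lemma nabla_mem (n : ℕ) (S : Fin n → ZMod 2) : nabla n S ∈ ST n := by
  constructor
  · intro i j h
    exact if_neg h
  · intro i j h2 hij hjn
    unfold nabla
    rw [if_pos ⟨by omega, hij, hjn⟩, if_pos ⟨by omega, by omega, by omega⟩,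
      if_pos ⟨by omega, by omega, hjn⟩, ← Finset.sum_add_distrib]
    apply Finset.sum_congr rfl
    intro l _
    rw [coeff_pascal i j (l : ℕ) h2 (by omega)]
    ring

lemma nabla_firstRow (n : ℕ) (S : Fin n → ZMod 2) (l : Fin n) :
    nabla n S 1 ((l : ℕ) + 1) = S l := by
  unfold nabla
  rw [if_pos ⟨le_rfl, by omega, by omega⟩]
  rw [Finset.sum_eq_single l]
  · rw [coeff_one, if_pos rfl, one_mul]
  · intro m _ hm
    rw [coeff_one, if_neg, zero_mul]
    intro hc
    exact hm (Fin.ext (by omega))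
  · intro h; exact absurd (Finset.mem_univ _) h

/-- `nabla` as a linear map into `ST n`. -/
def nablaL (n : ℕ) : (Fin n → ZMod 2) →ₗ[ZMod 2] ST n where
  toFun S := ⟨nabla n S, nabla_mem n S⟩
  map_add' S T := by
    apply Subtype.ext
    funext i j
    show nabla n (S + T) i j = nabla n S i j + nabla n T i j
    unfold nabla
    split_ifs with h
    · simp [mul_add, Finset.sum_add_distrib]
    · simp
  map_smul' c S := by
    apply Subtype.ext
    funext i j
    show nabla n (c • S) i j = c • nabla n S i j
    unfold nabla
    split_ifs with h
    · simp only [Pi.smul_apply, smul_eq_mul, Finset.mul_sum]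
      apply Finset.sum_congr rfl
      intro l _
      ring
    · simp

lemma nablaL_bijective (n : ℕ) : Function.Bijective (nablaL n) := by
  constructor
  · intro S T h
    have h' : nabla n S = nabla n T := congrArg Subtype.val h
    funext l
    rw [← nabla_firstRow n S l, ← nabla_firstRow n T l, h']
  · rintro ⟨a, ha⟩
    refine ⟨fun l => a 1 ((l : ℕ) + 1), Subtype.ext ?_⟩
    show nabla n _ = a
    funext i j
    by_cases h : InTri n i j
    · rw [nabla, if_pos h, ← expand n a ha i j h]
    · rw [nabla, if_neg h, ha.1 i j h]

lemma odd_iff_cast_ne_zero (d : ℤ) : Odd d ↔ ((d : ZMod 2) ≠ 0) := by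
  rw [Int.odd_iff, Ne, ZMod.intCast_zmod_eq_zero_iff_dvd]
  push_cast
  omega

end Steinhaus

namespace Steinhaus

/-- Proposition 2. A subset `G = {(i_1,j_1),…,(i_n,j_n)}` of
cardinality `n` of the triangle index set is a generating index set of `ST(n)`
iff `det M_G` is odd, where `(M_G)_{k,l} = C(i_k - 1, j_k - l)`. -/
theorem statement1 (n : ℕ) (hn : 1 ≤ n) (ij : Fin n → ℕ × ℕ)
    (hinj : Function.Injective ij)
    (htri : ∀ k, InTri n (ij k).1 (ij k).2) :
    IsGenIndexSet n (ST n) (Set.range ij) ↔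
      Odd (Matrix.det (Matrix.of fun k l : Fin n =>
        ibinom (((ij k).1 : ℤ) - 1) (((ij k).2 : ℤ) - (((l : ℕ) : ℤ) + 1)))) := by
  classical
  set G := Set.range ij with hGdef
  have hG : ∀ p ∈ G, InTri n p.1 p.2 := by rintro p ⟨k, rfl⟩; exact htri k
  set Mz : Matrix (Fin n) (Fin n) ℤ := Matrix.of fun k l : Fin n =>
    ibinom (((ij k).1 : ℤ) - 1) (((ij k).2 : ℤ) - (((l : ℕ) : ℤ) + 1)) with hMz
  set M : Matrix (Fin n) (Fin n) (ZMod 2) :=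
    Mz.map (Int.cast : ℤ → ZMod 2) with hM
  have hdet : (M.det : ZMod 2) = ((Mz.det : ℤ) : ZMod 2) := by
    have := RingHom.map_det (Int.castRingHom (ZMod 2)) Mz
    rw [show ((Mz.det : ℤ) : ZMod 2) = (Int.castRingHom (ZMod 2)) Mz.det from rfl, this]
    rfl
  -- the reindexing equivalence
  let e : Fin n ≃ G := Equiv.ofInjective ij hinj
  let r : (G → ZMod 2) → (Fin n → ZMod 2) := fun f k => f (e k)
  have hr : Function.Bijective r := by
    have : r = fun f => f ∘ e := rfl
    rw [this]
    exact (Equiv.arrowCongr e (Equiv.refl (ZMod 2))).symm.bijective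
  have hcomp : (r ∘ ⇑(proj (ST n) G) ∘ ⇑(nablaL n)) = M.mulVec := by
    funext S k
    show (proj (ST n) G) ((nablaL n) S) (e k) = M.mulVec S k
    have he : ((e k : G) : ℕ × ℕ) = ij k := rfl
    show nabla n S (((e k : G) : ℕ × ℕ)).1 (((e k : G) : ℕ × ℕ)).2 = M.mulVec S k
    rw [he]
    rw [nabla, if_pos (htri k)]
    rw [Matrix.mulVec]
    apply Finset.sum_congr rfl
    intro l _
    rfl
  have key : Function.Bijective (proj (ST n) G) ↔ Function.Bijective M.mulVec := by
    rw [← hcomp]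
    rw [Function.Bijective.of_comp_iff' hr (⇑(proj (ST n) G) ∘ ⇑(nablaL n))]
    exact (Function.Bijective.of_comp_iff _ (nablaL_bijective n)).symm
  have hbij : Function.Bijective M.mulVec ↔ Odd Mz.det := by
    rw [odd_iff_cast_ne_zero, ← hdet]
    constructor
    · intro h
      intro hz
      have hu : ¬ IsUnit M := by
        rw [Matrix.isUnit_iff_isUnit_det, hz]
        exact fun hu => hu.ne_zero rfl
      exact hu (Matrix.mulVec_injective_iff_isUnit.mp h.1)
    · intro h
      have hu : IsUnit M := by
        rw [Matrix.isUnit_iff_isUnit_det]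
        exact isUnit_iff_ne_zero.mpr h
      exact ⟨Matrix.mulVec_injective_iff_isUnit.mpr hu,
        Matrix.mulVec_surjective_iff_isUnit.mpr hu⟩
  rw [IsGenIndexSet, and_iff_right hG, key, hbij]


end Steinhaus
end

section
/- Let S be a sequence over Z/2Z of length n ≥ 3. The Steinhaus triangle ∇S is rotationally symmetric if and only if H(∇S) = ∇S' is rotationally symmetric and S = (σ₂(S')) · ∫_{i,x}S' · (σ₂(S')) for some i ∈ {1,…,n-2} and some x ∈ Z/2Z, where (σ₂(S')) denotes the one-term sequence whose term is σ₂(S') and · denotes concatenation of sequences. -/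
open Finset

namespace Steinhaus

/- Auxiliary char-2 arithmetic lemmas. -/
private lemma z2_cancel (u v : ZMod 2) : u + (v + u) = v := by revert u v; decide
private lemma z2_cancel' (u v : ZMod 2) : u + v + u = v := by revert u v; decide
private lemma z2_self (u : ZMod 2) : u + u = 0 := by revert u; decide
private lemma z2_flip (u v w : ZMod 2) : u = v + w → w = u + v := by revert u v w; decide
private lemma z2_flip' (u v w : ZMod 2) : u + v = w → v = w + u := by revert u v w; decide
private lemma z2_tel (u v w : ZMod 2) : u + v + (v + w) = u + w := by revert u v w; decide
private lemma z2_mid (u v : ZMod 2) : v = u + (u + v) := by revert u v; decide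

/-- Telescoping sum in `ZMod 2`. -/
private lemma tel (f : ℕ → ZMod 2) : ∀ m, 1 ≤ m →
    ∑ k ∈ Finset.Ico 1 m, (f k + f (k + 1)) = f 1 + f m := by
  intro m hm
  induction m with
  | zero => omega
  | succ m ih =>
    rcases Nat.lt_or_ge m 1 with h | h
    · have hm0 : m = 0 := by omega
      subst hm0
      simp only [Finset.Ico_self, Finset.sum_empty]
      exact (z2_self (f 1)).symm
    · rw [Finset.sum_Ico_succ_top h, ih h]
      exact z2_tel _ _ _

/-- Proposition 5. For a sequence `S` of length `n ≥ 3`, the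
triangle `∇S` is rotationally symmetric iff `H(∇S) = ∇S'` is rotationally
symmetric and `S = (σ₂(S')) · ∫_{i,x} S' · (σ₂(S'))` for some `i ∈ {1,…,n-2}`
and `x ∈ ZMod 2`.  Here `S'` is the first row of `H(∇S)`, i.e. `S'_j = a_{2,2+j}`. -/
theorem statement4 (n : ℕ) (hn : 3 ≤ n) (S : ℕ → ZMod 2)
    (a : ℕ → ℕ → ZMod 2) (ha : a ∈ ST n) (hrow : FirstRow n a S) :
    rot n a = a ↔
      (rot (n - 3) (Hmap n a) = Hmap n a ∧
        ∃ i, 1 ≤ i ∧ i ≤ n - 2 ∧ ∃ x : ZMod 2,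
          S 1 = seqSum (n - 3) (fun j => a 2 (2 + j)) ∧
          S n = seqSum (n - 3) (fun j => a 2 (2 + j)) ∧
          ∀ j, 2 ≤ j → j ≤ n - 1 →
            S j = antider i x (fun j' => a 2 (2 + j')) (j - 1)) := by
  obtain ⟨hz, hrule⟩ := ha
  -- the second row in terms of the first row
  have hrow2 : ∀ m, 1 ≤ m → m + 1 ≤ n → a 2 (m + 1) = S m + S (m + 1) := by
    intro m hm hmn
    rw [hrule 2 (m + 1) le_rfl (by omega) hmn,
      show (2 : ℕ) - 1 = 1 by norm_num, show m + 1 - 1 = m by omega,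
      hrow m hm (by omega), hrow (m + 1) (by omega) hmn]
  -- partial sums of the inner second row telescope
  have sumA : ∀ m, 1 ≤ m → m ≤ n - 2 →
      ∑ k ∈ Finset.Ico 1 m, a 2 (2 + k) = S 2 + S (m + 1) := by
    intro m hm hmn
    have hc : ∀ k ∈ Finset.Ico 1 m,
        a 2 (2 + k) = (fun t => S (t + 1)) k + (fun t => S (t + 1)) (k + 1) := by
      intro k hk
      simp only [Finset.mem_Ico] at hk
      have h := hrow2 (k + 1) (by omega) (by omega)
      rw [show 2 + k = k + 1 + 1 by omega]
      simpa using h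
    rw [Finset.sum_congr rfl hc, tel (fun t => S (t + 1)) m hm]
  -- the σ₂ of the inner second row
  have hsum : seqSum (n - 3) (fun j => a 2 (2 + j)) = S 2 + S (n - 1) := by
    simp only [seqSum]
    rw [show Finset.Icc 1 (n - 3) = Finset.Ico 1 (n - 2) by
      rw [← Finset.Ico_add_one_right_eq_Icc]; congr 1; omega]
    rw [sumA (n - 2) (by omega) le_rfl, show n - 2 + 1 = n - 1 by omega]
  constructor
  · -- forward direction
    intro hra
    have hR : ∀ i j, InTri n i j → a (j - i + 1) (n - i + 1) = a i j := by
      intro i j h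
      have h' := congrFun (congrFun hra i) j
      simp only [rot] at h'
      rwa [if_pos h] at h'
    have e1 : S n = S 1 := by
      have h := hR 1 1 ⟨le_rfl, le_rfl, by omega⟩
      rw [show (1 : ℕ) - 1 + 1 = 1 by omega, show n - 1 + 1 = n by omega] at h
      rw [← hrow 1 le_rfl (by omega), ← hrow n (by omega) le_rfl]
      exact h
    have e2 : S (n - 1) + S 1 = S 2 := by
      have h := hR 1 2 ⟨le_rfl, by omega, by omega⟩
      rw [show (2 : ℕ) - 1 + 1 = 2 by omega, show n - 1 + 1 = n by omega] at h
      have h2 := hrow2 (n - 1) (by omega) (by omega)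
      rw [show n - 1 + 1 = n by omega] at h2
      rw [h2, hrow 2 (by omega) (by omega)] at h
      rwa [e1] at h
    have e3 : S 1 = S 2 + S (n - 1) := z2_flip' _ _ _ e2
    refine ⟨?_, 1, le_rfl, by omega, S 2, ?_, ?_, ?_⟩
    · funext i j
      by_cases h : InTri (n - 3) i j
      · obtain ⟨u, v, w⟩ := h
        have h : InTri (n - 3) i j := ⟨u, v, w⟩
        have h2 : InTri (n - 3) (j - i + 1) (n - 3 - i + 1) :=
          ⟨by omega, by omega, by omega⟩
        have h3 : InTri n (1 + i) (2 + j) := ⟨by omega, by omega, by omega⟩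
        have hh := hR (1 + i) (2 + j) h3
        simp only [rot, Hmap, if_pos h, if_pos h2]
        rw [show 1 + (j - i + 1) = 2 + j - (1 + i) + 1 by omega,
          show 2 + (n - 3 - i + 1) = n - (1 + i) + 1 by omega]
        exact hh
      · simp only [rot, Hmap, if_neg h]
    · rw [hsum]; exact e3
    · rw [hsum, e1]; exact e3
    · intro j hj2 hjn
      simp only [antider]
      rw [Finset.Ico_self, Finset.sum_empty, add_zero,
        sumA (j - 1) (by omega) (by omega), show j - 1 + 1 = j by omega]
      exact z2_mid _ _
  · -- backward direction
    rintro ⟨hr, i, hi1, hi2, x, hS1, hSn, -⟩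
    have hA : S 1 = S 2 + S (n - 1) := by rw [hS1, hsum]
    have hB : S n = S 2 + S (n - 1) := by rw [hSn, hsum]
    -- interior rotational symmetry
    have hI : ∀ p q, 2 ≤ p → p + 1 ≤ q → q ≤ n - 1 →
        a p q = a (q - p + 1) (n - p + 1) := by
      intro p q hp hpq hq
      have h1 : InTri (n - 3) (p - 1) (q - 2) := ⟨by omega, by omega, by omega⟩
      have h2 : InTri (n - 3) (q - 2 - (p - 1) + 1) (n - 3 - (p - 1) + 1) :=
        ⟨by omega, by omega, by omega⟩
      have h := congrFun (congrFun hr (p - 1)) (q - 2)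
      simp only [rot, Hmap, if_pos h1, if_pos h2] at h
      rw [show 1 + (q - 2 - (p - 1) + 1) = q - p + 1 by omega,
        show 2 + (n - 3 - (p - 1) + 1) = n - p + 1 by omega,
        show 1 + (p - 1) = p by omega, show 2 + (q - 2) = q by omega] at h
      exact h.symm
    -- the diagonal (up to row n-1)
    have diag : ∀ p, 1 ≤ p → p ≤ n - 1 → a p p = S (n - p + 1) := by
      intro p
      induction p with
      | zero => omega
      | succ p ih =>
        intro _ hp
        rcases Nat.lt_or_ge p 2 with hp2 | hp2
        · interval_cases p
          · rw [hrow 1 le_rfl (by omega), show n - 1 + 1 = n by omega, hA, hB]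
          · have h1 := hrule 2 2 le_rfl le_rfl (by omega)
            rw [show (2 : ℕ) - 1 = 1 by norm_num] at h1
            rw [h1, hrow 1 le_rfl (by omega), hrow 2 (by omega) (by omega),
              show n - 2 + 1 = n - 1 by omega, hA]
            exact z2_cancel' _ _
        · have h1 := hrule (p + 1) (p + 1) (by omega) le_rfl (by omega)
          rw [Nat.add_sub_cancel] at h1
          have h2 := hI p (p + 1) (by omega) (by omega) (by omega)
          rw [show p + 1 - p + 1 = 2 by omega] at h2
          have h3 := hrow2 (n - p) (by omega) (by omega)
          have h4 := ih (by omega) (by omega)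
          rw [show n - (p + 1) + 1 = n - p by omega, h1, h2, h3, h4,
            show n - p + 1 = n - p + 1 from rfl]
          exact z2_cancel _ _
    -- the right edge (up to row n-1)
    have rcol : ∀ j, 1 ≤ j → j ≤ n - 1 → a j n = S j := by
      intro j
      induction j with
      | zero => omega
      | succ j ih =>
        intro _ hj
        rcases Nat.lt_or_ge j 2 with hj2 | hj2
        · interval_cases j
          · rw [hrow n (by omega) le_rfl, hA, hB]
          · have h1 := hrow2 (n - 1) (by omega) (by omega)
            rw [show n - 1 + 1 = n by omega] at h1
            rw [h1, hB]
            exact z2_cancel _ _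
        · have h1 := hrule (j + 1) n (by omega) (by omega) le_rfl
          rw [Nat.add_sub_cancel] at h1
          have h2 := hI j (n - 1) (by omega) (by omega) le_rfl
          rw [show n - 1 - j + 1 = n - j by omega,
            show n - j + 1 = n - j + 1 from rfl] at h2
          have h3 := hrule (n - j + 1) (n - j + 1) (by omega) le_rfl (by omega)
          rw [Nat.add_sub_cancel] at h3
          have d1 := diag (n - j + 1) (by omega) (by omega)
          rw [show n - (n - j + 1) + 1 = j by omega] at d1
          have d2 := diag (n - j) (by omega) (by omega)
          rw [show n - (n - j) + 1 = j + 1 by omega] at d2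
          rw [d1, d2] at h3
          have h5 : a (n - j) (n - j + 1) = S j + S (j + 1) := z2_flip _ _ _ h3
          rw [h1, h2, h5, ih (by omega) (by omega)]
          exact z2_cancel' _ _
    -- the corner entry
    have hann : a n n = S 2 + S (n - 1) := by
      have h1 := hrule n n (by omega) le_rfl le_rfl
      have d := diag (n - 1) (by omega) le_rfl
      rw [show n - (n - 1) + 1 = 2 by omega] at d
      have r := rcol (n - 1) (by omega) le_rfl
      rw [h1, d, r]
    -- full versions
    have diag' : ∀ p, 1 ≤ p → p ≤ n → a p p = S (n - p + 1) := by
      intro p h1 h2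
      rcases Nat.lt_or_ge p n with h | h
      · exact diag p h1 (by omega)
      · have hpn : p = n := by omega
        rw [hpn, hann, show n - n + 1 = 1 by omega, hA]
    have rcol' : ∀ j, 1 ≤ j → j ≤ n → a j n = S j := by
      intro j h1 h2
      rcases Nat.lt_or_ge j n with h | h
      · exact rcol j h1 (by omega)
      · have hjn : j = n := by omega
        rw [hjn, hann, hB]
    -- assemble
    funext i j
    by_cases hij : InTri n i j
    · simp only [rot, if_pos hij]
      obtain ⟨h1, h2, h3⟩ := hij
      by_cases hi1 : i = 1
      · subst hi1
        rw [show j - 1 + 1 = j by omega, show n - 1 + 1 = n by omega,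
          hrow j h2 h3, rcol' j h2 h3]
      · by_cases hji : j = i
        · subst hji
          rw [show j - j + 1 = 1 by omega, hrow (n - j + 1) (by omega) (by omega),
            diag' j h1 h3]
        · by_cases hjn : j = n
          · rw [hjn]
            have dd := diag' (n - i + 1) (by omega) (by omega)
            rw [show n - (n - i + 1) + 1 = i by omega] at dd
            rw [dd, rcol' i h1 (by omega)]
          · exact (hI i j (by omega) (by omega) (by omega)).symm
    · simp only [rot, if_neg hij]
      exact (hz i j hij).symm

end Steinhaus
end

section
/- Let n be a non-negative integer. The set G_R = {(i, n - ⌊n/3⌋) : i ∈ {1,…,⌊n/3⌋ + δ_{1,(n mod 3)}}} is a generating index set of RST(n), the subspace of rotationally symmetric Steinhaus triangles of size n. -/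
open Finset

namespace Steinhaus

private lemma zmod1 : ∀ u v : ZMod 2, u = v + (u + v) := by decide
private lemma zmod2 : ∀ u v w : ZMod 2, (u + v) + (u + (v + w)) = w := by decide
private lemma zmod3 : ∀ u v : ZMod 2, (u + v + u) + (v + u) = u := by decide
private lemma zmod4 : ∀ u v : ZMod 2, u = u + v → v = 0 := by decide
private lemma zmod5 : ∀ u v : ZMod 2, (u + v) + v = u := by decide
private lemma zmod6 : ∀ u v : ZMod 2, u + v = 0 → v = u := by decide

lemma mem_ST_iff {n : ℕ} {a : ℕ → ℕ → ZMod 2} :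
    a ∈ ST n ↔ (∀ i j, ¬ InTri n i j → a i j = 0) ∧
      ∀ i j, 2 ≤ i → i ≤ j → j ≤ n → a i j = a (i - 1) (j - 1) + a (i - 1) j := Iff.rfl

lemma mem_RST_iff {n : ℕ} {a : ℕ → ℕ → ZMod 2} :
    a ∈ RST n ↔ a ∈ ST n ∧ rot n a = a := Iff.rfl

private lemma sum_top {f : ℕ → ZMod 2} {a b : ℕ} (h : a ≤ b) (hb : 1 ≤ b) :
    ∑ k ∈ Icc a b, f k = ∑ k ∈ Icc a (b - 1), f k + f b := by
  obtain ⟨c, rfl⟩ : ∃ c, b = c + 1 := ⟨b - 1, by omega⟩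
  rw [Finset.sum_Icc_succ_top (by omega)]
  simp

private lemma sum_bot {f : ℕ → ZMod 2} {a b : ℕ} (h : a ≤ b) :
    ∑ k ∈ Icc a b, f k = f a + ∑ k ∈ Icc (a + 1) b, f k := by
  rw [Finset.Icc_eq_cons_Ioc h, Finset.sum_cons, ← Finset.Icc_add_one_left_eq_Ioc]

lemma st_ext {n : ℕ} {a b : ℕ → ℕ → ZMod 2} (ha : a ∈ ST n) (hb : b ∈ ST n)
    (h : ∀ j, a 1 j = b 1 j) : a = b := by
  obtain ⟨ha0, ha1⟩ := mem_ST_iff.mp ha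
  obtain ⟨hb0, hb1⟩ := mem_ST_iff.mp hb
  have key : ∀ i j, a i j = b i j := by
    intro i
    induction i using Nat.strong_induction_on with
    | _ i ih =>
      intro j
      by_cases hI : InTri n i j
      · obtain ⟨h1, h2, h3⟩ := hI
        by_cases hi1 : i = 1
        · subst hi1; exact h j
        · have hi2 : 2 ≤ i := by omega
          rw [ha1 i j hi2 h2 h3, hb1 i j hi2 h2 h3, ih (i - 1) (by omega) (j - 1),
            ih (i - 1) (by omega) j]
      · rw [ha0 i j hI, hb0 i j hI]
  funext i j; exact key i j

/-- The Steinhaus triangle generated by first row `S`. -/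
def nab (n : ℕ) (S : ℕ → ZMod 2) : ℕ → ℕ → ZMod 2 :=
  fun i j => if InTri n i j then der^[i - 1] S (j - i + 1) else 0

lemma nab_first {n : ℕ} {S : ℕ → ZMod 2} {j : ℕ} (h1 : 1 ≤ j) (h2 : j ≤ n) :
    nab n S 1 j = S j := by
  simp only [nab, if_pos (show InTri n 1 j from ⟨le_refl 1, h1, h2⟩)]
  have e : j - 1 + 1 = j := by omega
  rw [show (1 : ℕ) - 1 = 0 from rfl, Function.iterate_zero_apply, e]

lemma nab_mem (n : ℕ) (S : ℕ → ZMod 2) : nab n S ∈ ST n := by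
  rw [mem_ST_iff]
  constructor
  · intro i j h; simp only [nab, if_neg h]
  · intro i j h2 hij hjn
    have hI : InTri n i j := ⟨by omega, hij, hjn⟩
    have hI1 : InTri n (i - 1) (j - 1) := ⟨by omega, by omega, by omega⟩
    have hI2 : InTri n (i - 1) j := ⟨by omega, by omega, hjn⟩
    simp only [nab, if_pos hI, if_pos hI1, if_pos hI2]
    have e0 : i - 1 = (i - 2) + 1 := by omega
    have e1 : (i - 1) - 1 = i - 2 := by omega
    have e2 : (j - 1) - (i - 1) + 1 = j - i + 1 := by omega
    have e3 : j - (i - 1) + 1 = (j - i + 1) + 1 := by omega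
    rw [e1, e2, e3, e0, Function.iterate_succ_apply']
    rfl

lemma rot_mem {n : ℕ} {a : ℕ → ℕ → ZMod 2} (ha : a ∈ ST n) : rot n a ∈ ST n := by
  obtain ⟨ha0, ha1⟩ := mem_ST_iff.mp ha
  rw [mem_ST_iff]
  refine ⟨fun i j h => by simp only [rot, if_neg h], fun i j h2 hij hjn => ?_⟩
  have hI : InTri n i j := ⟨by omega, hij, hjn⟩
  have hI1 : InTri n (i - 1) (j - 1) := ⟨by omega, by omega, by omega⟩
  have hI2 : InTri n (i - 1) j := ⟨by omega, by omega, hjn⟩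
  simp only [rot, if_pos hI, if_pos hI1, if_pos hI2]
  have e1 : (j - 1) - (i - 1) + 1 = j - i + 1 := by omega
  have e2 : n - (i - 1) + 1 = n - i + 2 := by omega
  have e3 : j - (i - 1) + 1 = j - i + 2 := by omega
  rw [e1, e2, e3]
  have hr := ha1 (j - i + 2) (n - i + 2) (by omega) (by omega) (by omega)
  have e4 : j - i + 2 - 1 = j - i + 1 := by omega
  have e5 : n - i + 2 - 1 = n - i + 1 := by omega
  rw [e4, e5] at hr
  rw [hr]
  exact zmod1 _ _

lemma rot_fix_entry {n : ℕ} {a : ℕ → ℕ → ZMod 2} (h : rot n a = a) {i j : ℕ}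
    (hI : InTri n i j) : a i j = a (j - i + 1) (n - i + 1) := by
  have h2 := congrFun (congrFun h i) j
  simp only [rot] at h2
  rw [if_pos hI] at h2
  exact h2.symm

lemma rot_fix_of_edge {n : ℕ} {a : ℕ → ℕ → ZMod 2} (ha : a ∈ ST n)
    (h : ∀ j, 1 ≤ j → j ≤ n → a j n = a 1 j) : rot n a = a := by
  apply st_ext (rot_mem ha) ha
  intro j
  by_cases hI : InTri n 1 j
  · obtain ⟨-, h1, h2⟩ := hI
    simp only [rot, if_pos (show InTri n 1 j from ⟨le_refl 1, h1, h2⟩)]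
    have e1 : j - 1 + 1 = j := by omega
    have e2 : n - 1 + 1 = n := by omega
    rw [e1, e2]
    exact h j h1 h2
  · simp only [rot, if_neg hI]
    exact ((mem_ST_iff.mp ha).1 1 j hI).symm

lemma hmap_entry {n : ℕ} (a : ℕ → ℕ → ZMod 2) {i j : ℕ} (hI : InTri (n - 3) i j) :
    Hmap n a i j = a (1 + i) (2 + j) := by
  simp only [Hmap, if_pos hI]

lemma hmap_mem {n : ℕ} {a : ℕ → ℕ → ZMod 2} (ha : a ∈ ST n) : Hmap n a ∈ ST (n - 3) := by
  obtain ⟨ha0, ha1⟩ := mem_ST_iff.mp ha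
  rw [mem_ST_iff]
  refine ⟨fun i j h => by simp only [Hmap, if_neg h], fun i j h2 hij hjn => ?_⟩
  have hI : InTri (n - 3) i j := ⟨by omega, hij, hjn⟩
  have hI1 : InTri (n - 3) (i - 1) (j - 1) := ⟨by omega, by omega, by omega⟩
  have hI2 : InTri (n - 3) (i - 1) j := ⟨by omega, by omega, hjn⟩
  simp only [Hmap, if_pos hI, if_pos hI1, if_pos hI2]
  have hr := ha1 (1 + i) (2 + j) (by omega) (by omega) (by omega)
  have e1 : 1 + i - 1 = i := by omega
  have e2 : 2 + j - 1 = 1 + j := by omega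
  have e3 : 1 + (i - 1) = i := by omega
  have e4 : 2 + (j - 1) = 1 + j := by omega
  rw [e1, e2] at hr
  rw [e3, e4, hr]

lemma hmap_rot {n : ℕ} {a : ℕ → ℕ → ZMod 2} (ha : a ∈ ST n) (hr : rot n a = a) :
    rot (n - 3) (Hmap n a) = Hmap n a := by
  apply rot_fix_of_edge (hmap_mem ha)
  intro j hj1 hj2
  rw [hmap_entry a ⟨hj1, hj2, le_rfl⟩, hmap_entry a ⟨le_rfl, hj1, hj2⟩]
  have h2 := rot_fix_entry hr (show InTri n 2 (2 + j) from ⟨by omega, by omega, by omega⟩)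
  have e1 : 2 + j - 2 + 1 = 1 + j := by omega
  have e2 : n - 2 + 1 = 2 + (n - 3) := by omega
  rw [e1, e2] at h2
  exact h2.symm

/-- The sum of a first row of length `n-3`. -/
def sg (n : ℕ) (T : ℕ → ZMod 2) : ZMod 2 := ∑ k ∈ Icc 1 (n - 3), T k

/-- The first row of the rotationally symmetric extension. -/
def bS (n : ℕ) (T : ℕ → ZMod 2) (x : ZMod 2) : ℕ → ZMod 2 :=
  fun j => if j = 1 ∨ j = n then sg n T
    else if 2 ≤ j ∧ j ≤ n - 1 then x + ∑ k ∈ Icc 1 (j - 2), T k else 0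

lemma bS_one {n : ℕ} {T : ℕ → ZMod 2} {x : ZMod 2} : bS n T x 1 = sg n T := by
  simp [bS]

lemma bS_last {n : ℕ} {T : ℕ → ZMod 2} {x : ZMod 2} : bS n T x n = sg n T := by
  simp [bS]

lemma bS_mid {n : ℕ} {T : ℕ → ZMod 2} {x : ZMod 2} {j : ℕ} (h2 : 2 ≤ j) (h3 : j ≤ n - 1) :
    bS n T x j = x + ∑ k ∈ Icc 1 (j - 2), T k := by
  simp only [bS]
  rw [if_neg (by omega : ¬(j = 1 ∨ j = n)), if_pos ⟨h2, h3⟩]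

lemma construct {n : ℕ} {b : ℕ → ℕ → ZMod 2} (hn : 3 ≤ n) (hb : b ∈ ST (n - 3))
    (hrb : rot (n - 3) b = b) (x : ZMod 2) :
    nab n (bS n (b 1) x) ∈ RST n ∧ Hmap n (nab n (bS n (b 1) x)) = b := by
  set T := b 1 with hT
  set a := nab n (bS n T x) with hadef
  have ha : a ∈ ST n := nab_mem n _
  obtain ⟨ha0, ha1⟩ := mem_ST_iff.mp ha
  have hS : ∀ j, 1 ≤ j → j ≤ n → a 1 j = bS n T x j := fun j h1 h2 => nab_first h1 h2
  -- row 2 of `a` matches the first row of `b`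
  have row2 : ∀ j, 1 ≤ j → j ≤ n - 3 → a 2 (2 + j) = T j := by
    intro j h1 h3
    have hr := ha1 2 (2 + j) (le_refl 2) (by omega) (by omega)
    rw [show (2 : ℕ) - 1 = 1 from rfl, show 2 + j - 1 = 1 + j by omega] at hr
    rw [hr, hS (1 + j) (by omega) (by omega), hS (2 + j) (by omega) (by omega),
      bS_mid (by omega) (by omega), bS_mid (by omega) (by omega),
      show 1 + j - 2 = j - 1 by omega, show 2 + j - 2 = j by omega,
      sum_top h1 h1, show j - 1 = j - 1 from rfl]
    exact zmod2 _ _ _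
  -- Hmap a = b
  have hHb : Hmap n a = b := by
    apply st_ext (hmap_mem ha) hb
    intro j
    by_cases hI : InTri (n - 3) 1 j
    · obtain ⟨-, hj1, hj2⟩ := hI
      rw [hmap_entry a ⟨le_rfl, hj1, hj2⟩, show (1 : ℕ) + 1 = 2 from rfl]
      exact row2 j hj1 hj2
    · simp only [Hmap, if_neg hI]
      exact ((mem_ST_iff.mp hb).1 1 j hI).symm
  -- left diagonal values
  have diag : ∀ i, 2 ≤ i → i ≤ n - 1 →
      a i i = sg n T + x + ∑ m ∈ Icc (n - i) (n - 3), T m := by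
    intro i hi2
    induction i, hi2 using Nat.le_induction with
    | base =>
      intro _
      have hr := ha1 2 2 (le_refl 2) (le_refl 2) (by omega)
      rw [show (2 : ℕ) - 1 = 1 from rfl] at hr
      rw [hr, hS 1 (by omega) (by omega), hS 2 (by omega) (by omega), bS_one,
        bS_mid (le_refl 2) (by omega), show (2 : ℕ) - 2 = 0 from rfl,
        Finset.Icc_eq_empty (by omega : ¬(1 : ℕ) ≤ 0), Finset.sum_empty,
        Finset.Icc_eq_empty (by omega : ¬n - 2 ≤ n - 3), Finset.sum_empty]
      ring
    | succ i hi ih =>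
      intro hle
      have hr := ha1 (i + 1) (i + 1) (by omega) le_rfl (by omega)
      rw [show i + 1 - 1 = i by omega] at hr
      have hmid : a i (i + 1) = T (n - 1 - i) := by
        have h5 : Hmap n a (i - 1) (i - 1) = a (1 + (i - 1)) (2 + (i - 1)) :=
          hmap_entry a ⟨by omega, le_rfl, by omega⟩
        rw [show 1 + (i - 1) = i by omega, show 2 + (i - 1) = i + 1 by omega] at h5
        rw [← h5, hHb]
        have h6 := rot_fix_entry hrb (show InTri (n - 3) (i - 1) (i - 1) from
          ⟨by omega, le_rfl, by omega⟩)
        rw [show (i - 1) - (i - 1) + 1 = 1 by omega,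
          show (n - 3) - (i - 1) + 1 = n - 1 - i by omega] at h6
        exact h6
      rw [hr, hmid, ih (by omega), show n - (i + 1) = n - 1 - i by omega,
        sum_bot (by omega : n - 1 - i ≤ n - 3), show n - 1 - i + 1 = n - i by omega]
      ring
  -- right edge of `a` equals the first row
  have redge : ∀ j, 1 ≤ j → j ≤ n → a j n = a 1 j := by
    intro j
    induction j using Nat.strong_induction_on with
    | _ j ihj =>
      intro hj1 hjn
      by_cases e1 : j = 1
      · subst e1
        rw [hS n (by omega) le_rfl, hS 1 (by omega) (by omega), bS_one, bS_last]
      · by_cases e2 : j = 2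
        · subst e2
          have hr := ha1 2 n (le_refl 2) (by omega) le_rfl
          rw [show (2 : ℕ) - 1 = 1 from rfl] at hr
          rw [hr, hS (n - 1) (by omega) (by omega), hS n (by omega) le_rfl,
            hS 2 (by omega) (by omega), bS_last, bS_mid (by omega) le_rfl,
            bS_mid (le_refl 2) (by omega), show n - 1 - 2 = n - 3 by omega,
            show (2 : ℕ) - 2 = 0 from rfl,
            Finset.Icc_eq_empty (by omega : ¬(1 : ℕ) ≤ 0), Finset.sum_empty, add_zero]
          exact zmod5 _ _
        · by_cases e3 : j = n
          · rw [e3]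
            have hr := ha1 n n (by omega) le_rfl le_rfl
            have hd := diag (n - 1) (by omega) le_rfl
            rw [show n - (n - 1) = 1 by omega] at hd
            rw [hr, hd, ihj (n - 1) (by omega) (by omega) (by omega),
              hS (n - 1) (by omega) (by omega), hS n (by omega) le_rfl, bS_last,
              bS_mid (by omega) le_rfl, show n - 1 - 2 = n - 3 by omega]
            show (sg n T + x + sg n T) + (x + sg n T) = sg n T
            exact zmod3 _ _
          · have hj3 : 3 ≤ j := by omega
            have hjn1 : j ≤ n - 1 := by omega
            have hr := ha1 j n (by omega) hjn le_rfl
            have h5 : b (j - 2) (n - 3) = a (j - 1) (n - 1) := by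
              rw [← hHb, hmap_entry a ⟨by omega, by omega, le_rfl⟩,
                show 1 + (j - 2) = j - 1 by omega, show 2 + (n - 3) = n - 1 by omega]
            have h6 := rot_fix_entry hrb (show InTri (n - 3) 1 (j - 2) from
              ⟨le_rfl, by omega, by omega⟩)
            rw [show j - 2 - 1 + 1 = j - 2 by omega,
              show n - 3 - 1 + 1 = n - 3 by omega] at h6
            rw [hr, ← h5, ← h6, ihj (j - 1) (by omega) (by omega) (by omega),
              hS (j - 1) (by omega) (by omega), hS j (by omega) (by omega),
              bS_mid (by omega) (by omega), bS_mid (by omega) hjn1,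
              show j - 1 - 2 = j - 3 by omega,
              sum_top (by omega : 1 ≤ j - 2) (by omega),
              show j - 2 - 1 = j - 3 by omega]
            ring
  exact ⟨mem_RST_iff.mpr ⟨ha, rot_fix_of_edge ha redge⟩, hHb⟩

def mG (n : ℕ) : ℕ := n / 3 + if n % 3 = 1 then 1 else 0
def jG (n : ℕ) : ℕ := n - n / 3

lemma mG_succ {n : ℕ} (hn : 3 ≤ n) : mG n = mG (n - 3) + 1 := by
  unfold mG
  by_cases h : n % 3 = 1
  · rw [if_pos h, if_pos (by omega : (n - 3) % 3 = 1)]; omega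
  · rw [if_neg h, if_neg (by omega : ¬(n - 3) % 3 = 1)]; omega

lemma jG_succ {n : ℕ} (hn : 3 ≤ n) : jG n = jG (n - 3) + 2 := by
  unfold jG; omega

lemma mG_lt_jG {n : ℕ} (hn : 3 ≤ n) : mG n + 1 ≤ jG n := by
  unfold mG jG
  by_cases h : n % 3 = 1
  · rw [if_pos h]; omega
  · rw [if_neg h]; omega

lemma mG_pos {n : ℕ} (hn : 3 ≤ n) : 1 ≤ mG n := by
  unfold mG; omega

lemma jG_bounds {n : ℕ} (hn : 3 ≤ n) : 2 ≤ jG n ∧ jG n ≤ n - 1 := by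
  unfold jG; omega

lemma mG_jG_bounds (m i : ℕ) (h1 : 1 ≤ i) (h2 : i ≤ mG m) : InTri m i (jG m) := by
  unfold mG at h2
  unfold jG
  by_cases h : m % 3 = 1
  · rw [if_pos h] at h2; exact ⟨h1, by omega, by omega⟩
  · rw [if_neg h] at h2; exact ⟨h1, by omega, by omega⟩

lemma vanish {n : ℕ} {a : ℕ → ℕ → ZMod 2} (hn : 3 ≤ n) (ha : a ∈ RST n)
    (hH : Hmap n a = 0) (h0 : a 1 (jG n) = 0) : a = 0 := by
  obtain ⟨haST, hrot⟩ := mem_RST_iff.mp ha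
  obtain ⟨ha0, ha1⟩ := mem_ST_iff.mp haST
  have hT : ∀ j, 1 ≤ j → j ≤ n - 3 → a 2 (2 + j) = 0 := by
    intro j h1 h2
    have := congrFun (congrFun hH 1) j
    rw [hmap_entry a ⟨le_rfl, h1, h2⟩] at this
    rw [show (1 : ℕ) + 1 = 2 from rfl] at this
    exact this
  have hstep : ∀ j, 1 ≤ j → j ≤ n - 3 → a 1 (2 + j) = a 1 (1 + j) := by
    intro j h1 h2
    have hr := ha1 2 (2 + j) (le_refl 2) (by omega) (by omega)
    rw [show (2 : ℕ) - 1 = 1 from rfl, show 2 + j - 1 = 1 + j by omega] at hr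
    rw [hT j h1 h2] at hr
    exact zmod6 _ _ hr.symm
  have hconst : ∀ j, 2 ≤ j → j ≤ n - 1 → a 1 j = a 1 2 := by
    intro j hj2
    induction j, hj2 using Nat.le_induction with
    | base => intro _; rfl
    | succ j hj ih =>
      intro hle
      have := hstep (j - 1) (by omega) (by omega)
      rw [show 2 + (j - 1) = j + 1 by omega, show 1 + (j - 1) = j by omega] at this
      rw [this]
      exact ih (by omega)
  have h11 := rot_fix_entry hrot (show InTri n 1 1 from ⟨le_rfl, le_rfl, by omega⟩)
  rw [show (1 : ℕ) - 1 + 1 = 1 from rfl, show n - 1 + 1 = n by omega] at h11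
  have h12 := rot_fix_entry hrot (show InTri n 1 2 from ⟨le_rfl, by omega, by omega⟩)
  rw [show (2 : ℕ) - 1 + 1 = 2 from rfl, show n - 1 + 1 = n by omega] at h12
  have hr2 := ha1 2 n (le_refl 2) (by omega) le_rfl
  rw [show (2 : ℕ) - 1 = 1 from rfl] at hr2
  rw [hconst (n - 1) (by omega) (by omega)] at hr2
  rw [hr2] at h12
  have h1n : a 1 n = 0 := zmod4 _ _ h12
  have h1one : a 1 1 = 0 := by rw [h11, h1n]
  have h12z : a 1 2 = 0 := by
    obtain ⟨hj2, hjn1⟩ := jG_bounds hn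
    rw [← hconst (jG n) hj2 hjn1, h0]
  have hrow : ∀ j, a 1 j = (0 : ℕ → ℕ → ZMod 2) 1 j := by
    intro j
    simp only [Pi.zero_apply]
    by_cases hI : InTri n 1 j
    · obtain ⟨-, hj1, hjn⟩ := hI
      by_cases hj1' : j = 1
      · subst hj1'; exact h1one
      · by_cases hjn' : j = n
        · subst hjn'; exact h1n
        · rw [hconst j (by omega) (by omega)]; exact h12z
    · exact ha0 1 j hI
  exact st_ext haST (zero_mem (ST n)) hrow

lemma keyP : ∀ n : ℕ,
    (∀ a, a ∈ RST n → (∀ i, 1 ≤ i → i ≤ mG n → a i (jG n) = 0) → a = 0) ∧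
    (∀ g : ℕ → ZMod 2, ∃ a, a ∈ RST n ∧ ∀ i, 1 ≤ i → i ≤ mG n → a i (jG n) = g i) := by
  intro n
  induction n using Nat.strong_induction_on with
  | _ n ih =>
    by_cases hn3 : n < 3
    · interval_cases n
      · -- n = 0
        constructor
        · intro a ha _
          obtain ⟨⟨ha0, -⟩, -⟩ := mem_RST_iff.mp ha
          funext i j
          rw [ha0 i j (by rintro ⟨h1, h2, h3⟩; omega)]
          rfl
        · intro g
          refine ⟨0, zero_mem _, fun i h1 h2 => ?_⟩
          have h0 : mG 0 = 0 := rfl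
          omega
      · -- n = 1
        constructor
        · intro a ha hv
          obtain ⟨haST, -⟩ := mem_RST_iff.mp ha
          have h11 : a 1 1 = 0 := hv 1 le_rfl (by simp [mG])
          apply st_ext haST (zero_mem (ST 1))
          intro j
          simp only [Pi.zero_apply]
          by_cases hI : InTri 1 1 j
          · obtain ⟨-, hj1, hj2⟩ := hI
            have : j = 1 := by omega
            subst this; exact h11
          · exact (mem_ST_iff.mp haST).1 1 j hI
        · intro g
          refine ⟨nab 1 (fun _ => g 1), mem_RST_iff.mpr ⟨nab_mem 1 _, ?_⟩, ?_⟩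
          · apply rot_fix_of_edge (nab_mem 1 _)
            intro j h1 h2
            have : j = 1 := by omega
            subst this; rfl
          · intro i h1 h2
            have hm : mG 1 = 1 := rfl
            have hji : jG 1 = 1 := rfl
            rw [hm] at h2
            have : i = 1 := by omega
            subst this
            rw [hji, nab_first le_rfl le_rfl]
      · -- n = 2
        constructor
        · intro a ha _
          obtain ⟨haST, hrot⟩ := mem_RST_iff.mp ha
          obtain ⟨ha0, ha1⟩ := mem_ST_iff.mp haST
          have h11 := rot_fix_entry hrot (show InTri 2 1 1 from ⟨le_rfl, le_rfl, by omega⟩)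
          rw [show (1 : ℕ) - 1 + 1 = 1 from rfl, show (2 : ℕ) - 1 + 1 = 2 from rfl] at h11
          have h12 := rot_fix_entry hrot (show InTri 2 1 2 from ⟨le_rfl, by omega, le_rfl⟩)
          rw [show (2 : ℕ) - 1 + 1 = 2 from rfl] at h12
          have h22 := ha1 2 2 le_rfl le_rfl le_rfl
          rw [show (2 : ℕ) - 1 = 1 from rfl] at h22
          -- h11 : a 1 1 = a 1 2, h12 : a 1 2 = a 2 2, h22 : a 2 2 = a 1 1 + a 1 2
          have hz : a 1 2 = 0 := by
            have h6 : a 1 2 = a 1 2 + a 1 2 := by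
              calc a 1 2 = a 2 2 := h12
                _ = a 1 1 + a 1 2 := h22
                _ = a 1 2 + a 1 2 := by rw [h11]
            exact zmod4 _ _ h6
          have hz1 : a 1 1 = 0 := by rw [h11, hz]
          apply st_ext haST (zero_mem (ST 2))
          intro j
          simp only [Pi.zero_apply]
          by_cases hI : InTri 2 1 j
          · obtain ⟨-, hj1, hj2⟩ := hI
            match j, hj1, hj2 with
            | 1, _, _ => exact hz1
            | 2, _, _ => exact hz
          · exact ha0 1 j hI
        · intro g
          refine ⟨0, zero_mem _, fun i h1 h2 => ?_⟩
          have : mG 2 = 0 := rfl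
          omega
    · have hn : 3 ≤ n := by omega
      obtain ⟨ih1, ih2⟩ := ih (n - 3) (by omega)
      have hmS := mG_succ hn
      have hjS := jG_succ hn
      constructor
      · intro a haR hvals
        have hbR : Hmap n a ∈ RST (n - 3) := by
          obtain ⟨haST, hrot⟩ := mem_RST_iff.mp haR
          exact mem_RST_iff.mpr ⟨hmap_mem haST, hmap_rot haST hrot⟩
        have hbv : ∀ i, 1 ≤ i → i ≤ mG (n - 3) → Hmap n a i (jG (n - 3)) = 0 := by
          intro i h1 h2
          have hI := mG_jG_bounds (n - 3) i h1 h2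
          rw [hmap_entry a hI, show 2 + jG (n - 3) = jG n by omega,
            show 1 + i = i + 1 by omega]
          exact hvals (i + 1) (by omega) (by omega)
        have hb0 : Hmap n a = 0 := ih1 _ hbR hbv
        exact vanish hn haR hb0 (hvals 1 le_rfl (by have := mG_pos hn; omega))
      · intro g
        obtain ⟨b, hbR, hbv⟩ := ih2 (fun i => g (i + 1))
        obtain ⟨hbST, hbrot⟩ := mem_RST_iff.mp hbR
        set x : ZMod 2 := g 1 + ∑ k ∈ Icc 1 (jG n - 2), b 1 k with hx
        obtain ⟨haR, haH⟩ := construct hn hbST hbrot x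
        refine ⟨nab n (bS n (b 1) x), haR, ?_⟩
        intro i h1 h2
        obtain ⟨hj2, hjn1⟩ := jG_bounds hn
        by_cases hi : i = 1
        · subst hi
          rw [nab_first (by omega) (by omega), bS_mid hj2 hjn1, hx]
          exact zmod5 _ _
        · have hij : i ≤ jG n - 1 := by have := mG_lt_jG hn; omega
          have hI : InTri (n - 3) (i - 1) (jG n - 2) := ⟨by omega, by omega, by omega⟩
          have h5 := hmap_entry (nab n (bS n (b 1) x)) hI
          rw [show 1 + (i - 1) = i by omega, show 2 + (jG n - 2) = jG n by omega] at h5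
          rw [← h5, haH]
          have := hbv (i - 1) (by omega) (by omega)
          rw [show jG (n - 3) = jG n - 2 by omega, show i - 1 + 1 = i by omega] at this
          exact this


/-- Corollary 2. The set
`G_R = {(i, n - ⌊n/3⌋) : 1 ≤ i ≤ ⌊n/3⌋ + δ_{1,(n mod 3)}}` is a generating index
set of `RST(n)`. -/
theorem statement5 (n : ℕ) :
    IsGenIndexSet n (RST n)
      ((fun i => (i, n - n / 3)) ''
        Set.Icc 1 (n / 3 + if n % 3 = 1 then 1 else 0)) := by
  obtain ⟨k1, k2⟩ := keyP n
  constructor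
  · rintro p ⟨i, hi, rfl⟩
    rw [Set.mem_Icc] at hi
    exact mG_jG_bounds n i hi.1 hi.2
  · constructor
    · intro a b hab
      have hsub : (↑a - ↑b : ℕ → ℕ → ZMod 2) ∈ RST n := sub_mem a.2 b.2
      have hv : ∀ i, 1 ≤ i → i ≤ mG n → (↑a - ↑b : ℕ → ℕ → ZMod 2) i (jG n) = 0 := by
        intro i h1 h2
        have hmem : ((i, n - n / 3) : ℕ × ℕ) ∈
            ((fun i => (i, n - n / 3)) '' Set.Icc 1 (n / 3 + if n % 3 = 1 then 1 else 0)) :=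
          ⟨i, Set.mem_Icc.mpr ⟨h1, h2⟩, rfl⟩
        have h3 := congrFun hab ⟨(i, n - n / 3), hmem⟩
        simp only [Pi.sub_apply]
        exact sub_eq_zero.mpr h3
      have h4 := k1 _ hsub hv
      exact Subtype.ext (sub_eq_zero.mp h4)
    · intro g
      obtain ⟨a, haR, hav⟩ := k2 (fun i =>
        if h : 1 ≤ i ∧ i ≤ mG n then
          g ⟨(i, n - n / 3), ⟨i, Set.mem_Icc.mpr ⟨h.1, h.2⟩, rfl⟩⟩ else 0)
      refine ⟨⟨a, haR⟩, ?_⟩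
      funext p
      obtain ⟨q, hq⟩ := p
      obtain ⟨i, hi, rfl⟩ := hq
      rw [Set.mem_Icc] at hi
      have h5 := hav i hi.1 hi.2
      rw [dif_pos ⟨hi.1, hi.2⟩] at h5
      exact h5

end Steinhaus
end

section
/- A sequence S over Z/2Z of length n is symmetric if and only if its derived sequence ∂S is symmetric and σ₂(∂S) = 0. -/
open Finset

namespace Steinhaus

/-- Proposition 1. A sequence `S` of length `n` over `ZMod 2`
is symmetric iff `∂S` is symmetric and `σ₂(∂S) = 0`. -/
theorem statement8 (n : ℕ) (S : ℕ → ZMod 2) :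
    SymmSeq n S ↔ SymmSeq (n - 1) (der S) ∧ seqSum (n - 1) (der S) = 0 := by
  have two : (2 : ZMod 2) = 0 := rfl
  have cancel : ∀ x : ZMod 2, x + x = 0 := by decide
  have tele : ∀ m, ∑ j ∈ Finset.Icc 1 m, der S j = S 1 + S (m + 1) := by
    intro m
    induction m with
    | zero => simp [cancel]
    | succ m ih =>
      rw [Finset.sum_Icc_succ_top (by omega), ih, der,
        show S 1 + S (m + 1) + (S (m + 1) + S (m + 1 + 1)) =
          S 1 + S (m + 1 + 1) + (S (m + 1) + S (m + 1)) by ring,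
        cancel, add_zero]
  constructor
  · intro h
    constructor
    · intro j hj1 hjn
      have h1 : S (n - j + 1) = S j := h j hj1 (by omega)
      have h2 : S (n - (j + 1) + 1) = S (j + 1) := h (j + 1) (by omega) (by omega)
      have e1 : n - 1 - j + 1 = n - j := by omega
      have e2 : n - (j + 1) + 1 = n - j := by omega
      simp only [der, e1]
      rw [h1, ← e2, h2, add_comm]
    · rcases n with _ | m
      · simp [seqSum]
      · rcases Nat.eq_zero_or_pos m with hm | hm
        · subst hm; simp [seqSum, der, cancel]
        · have h1 : S (m + 1 - 1 + 1) = S 1 := h 1 le_rfl (by omega)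
          rw [show m + 1 - 1 + 1 = m + 1 by omega] at h1
          rw [seqSum, show m + 1 - 1 = m from rfl, tele m, h1, cancel]
  · rintro ⟨hd, hs⟩
    rcases n with _ | m
    · intro j hj1 hjn; omega
    · have hSn : S (m + 1) = S 1 := by
        rcases Nat.eq_zero_or_pos m with hm | hm
        · subst hm; rfl
        · rw [seqSum, show m + 1 - 1 = m from rfl, tele m] at hs
          have h2 := congrArg (fun x => S 1 + x) hs
          simp only [← add_assoc, cancel, zero_add, add_zero] at h2
          exact h2
      intro j hj1 hjn
      induction j with
      | zero => omega
      | succ k ih =>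
        rcases Nat.eq_zero_or_pos k with hk | hk
        · subst hk
          rw [show m + 1 - 1 + 1 = m + 1 by omega, hSn]
        · have ihk : S (m + 1 - k + 1) = S k := ih hk (by omega)
          have hdk : der S (m + 1 - 1 - k + 1) = der S k := hd k hk (by omega)
          rw [show m + 1 - 1 - k + 1 = m + 1 - k by omega] at hdk
          simp only [der] at hdk
          rw [show m + 1 - k + 1 = m + 1 - k + 1 from rfl, ihk] at hdk
          have : S (m + 1 - k) = S (k + 1) := by
            have := congrArg (fun x => x + S k) hdk
            simpa [add_assoc, cancel, add_comm] using this
          rw [show m + 1 - (k + 1) + 1 = m + 1 - k by omega, this]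

end Steinhaus
end

section
/- A binary Steinhaus triangle (a_{i,j})_{1≤i≤j≤n} of size n is horizontally symmetric if and only if a_{n-2i, n-i} = 0 for all i ∈ {0, 1, …, ⌊n/2⌋ - 1}. -/
open Finset

namespace Steinhaus


lemma two_eq_zero' (x : ZMod 2) : x + x = 0 := by
  revert x; decide

lemma rowsym (n : ℕ) (a : ℕ → ℕ → ZMod 2) (ha : a ∈ ST n)
    (hz : ∀ i, i < n / 2 → a (n - 2 * i) (n - i) = 0) :
    ∀ t i, i + t = n → 1 ≤ i → ∀ j, i ≤ j → j ≤ n → a i (n - j + i) = a i j := by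
  obtain ⟨-, hrule⟩ := ha
  intro t
  induction t with
  | zero =>
    intro i hin h1 j hij hjn
    have hi : i = n := by omega
    have hj : j = n := by omega
    subst hi; subst hj
    congr 1
    omega
  | succ t IH =>
    intro i hin h1 j hij hjn
    have hi1 : i + 1 ≤ n := by omega
    have IH' : ∀ j, i + 1 ≤ j → j ≤ n → a (i+1) (n - j + (i+1)) = a (i+1) j :=
      fun j hj hjn => IH (i+1) (by omega) (by omega) j hj hjn
    have rule : ∀ j, i ≤ j → j + 1 ≤ n → a (i+1) (j+1) = a i j + a i (j+1) := by
      intro j hj1 hj2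
      have := hrule (i+1) (j+1) (by omega) (by omega) (by omega)
      simpa using this
    have step : ∀ j, i ≤ j → j + 1 ≤ n →
        a i (j+1) + a i (n - (j+1) + i) = a i j + a i (n - j + i) := by
      intro j hj1 hj2
      have E1 : a (i+1) (j+1) = a i j + a i (j+1) := rule j hj1 hj2
      have E2 : a (i+1) (n - j + i) = a i (n - j + i - 1) + a i (n - j + i) := by
        have h3 : n - j + i = (n - j + i - 1) + 1 := by omega
        rw [h3, rule (n - j + i - 1) (by omega) (by omega)]
        rw [Nat.add_sub_cancel]
      have E3 : a (i+1) (n - j + i) = a (i+1) (j+1) := by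
        have h := IH' (n - j + i) (by omega) (by omega)
        rw [show n - (n - j + i) + (i+1) = j + 1 from by omega] at h
        exact h.symm
      have key : a i j + a i (j+1) = a i (n - j + i - 1) + a i (n - j + i) :=
        E1.symm.trans (E3.symm.trans E2)
      rw [show n - (j+1) + i = n - j + i - 1 from by omega]
      linear_combination key + two_eq_zero' (a i (n - j + i - 1)) - two_eq_zero' (a i j)
    have const : ∀ j, i ≤ j → j ≤ n → a i j + a i (n - j + i) = a i i + a i n := by
      intro j hj
      induction j, hj using Nat.le_induction with
      | base => intro _; rw [show n - i + i = n from by omega]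
      | succ j hj IHc =>
        intro hjn
        rw [step j hj hjn]
        exact IHc (by omega)
    have pin : a i i + a i n = 0 := by
      rcases Nat.even_or_odd (n + i) with he | ho
      · obtain ⟨m, hm⟩ := he
        have hc := const m (by omega) (by omega)
        rw [show n - m + i = m from by omega] at hc
        rw [← hc]
        exact two_eq_zero' _
      · obtain ⟨m, hm⟩ := ho
        have hc := const m (by omega) (by omega)
        rw [show n - m + i = m + 1 from by omega,
            ← rule m (by omega) (by omega)] at hc
        have hk := hz ((n - i - 1)/2) (by omega)
        rw [show n - 2*((n-i-1)/2) = i + 1 from by omega,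
            show n - (n-i-1)/2 = m + 1 from by omega] at hk
        rw [← hc, hk]
    have h0 : a i j + a i (n - j + i) = 0 := (const j hij hjn).trans pin
    linear_combination h0 - two_eq_zero' (a i j)

/-- Proposition 11. A Steinhaus triangle `(a_{i,j})` of size
`n` is horizontally symmetric iff `a_{n-2i, n-i} = 0` for all
`i ∈ {0,…,⌊n/2⌋ - 1}`. -/
theorem statement10 (n : ℕ) (a : ℕ → ℕ → ZMod 2) (ha : a ∈ ST n) :
    hrefl n a = a ↔ ∀ i, i < n / 2 → a (n - 2 * i) (n - i) = 0 := by
  constructor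
  · intro hs i hi
    have hsym : ∀ p q, InTri n p q → a p (n - q + p) = a p q := by
      intro p q hpq
      have h := congrFun (congrFun hs p) q
      unfold hrefl at h
      rwa [if_pos hpq] at h
    have hr := ha.2 (n - 2*i) (n - i) (by omega) (by omega) (by omega)
    have e := hsym (n - 2*i - 1) (n - i - 1) ⟨by omega, by omega, by omega⟩
    rw [show n - (n - i - 1) + (n - 2*i - 1) = n - i from by omega] at e
    rw [hr, ← e]
    exact two_eq_zero' _
  · intro hz
    funext p q
    show (if InTri n p q then a p (n - q + p) else 0) = a p q
    by_cases hpq : InTri n p q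
    · rw [if_pos hpq]
      obtain ⟨h1, h2, h3⟩ := hpq
      exact rowsym n a ha hz (n - p) p (by omega) h1 q h2 h3
    · rw [if_neg hpq]
      exact (ha.1 p q hpq).symm

end Steinhaus
end

section
/- For every non-negative integer n, the dimension over Z/2Z of the vector space HST(n) of horizontally symmetric binary Steinhaus triangles of size n equals ⌈n/2⌉. -/
open Finset

namespace Steinhaus

/-- The triangle generated by a first row `S`, defined row by row. -/
def triRow (n : ℕ) (S : ℕ → ZMod 2) : ℕ → ℕ → ZMod 2
  | 0 => fun _ => 0
  | 1 => fun j => if InTri n 1 j then S j else 0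
  | (i+2) => fun j =>
      if InTri n (i+2) j then triRow n S (i+1) (j-1) + triRow n S (i+1) j else 0

lemma triRow_eq_zero (n : ℕ) (S : ℕ → ZMod 2) (i j : ℕ) (h : ¬ InTri n i j) :
    triRow n S i j = 0 := by
  match i with
  | 0 => rfl
  | 1 => simp [triRow, h]
  | (i+2) => simp [triRow, h]

lemma triRow_mem_ST (n : ℕ) (S : ℕ → ZMod 2) : (fun i => triRow n S i) ∈ ST n := by
  refine ⟨fun i j h => triRow_eq_zero n S i j h, ?_⟩
  intro i j h2 hij hjn
  match i, h2 with
  | (i+2), _ =>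
    have hin : InTri n (i+2) j := ⟨by omega, hij, hjn⟩
    show triRow n S (i+2) j = _
    simp only [triRow, if_pos hin]
    norm_num

lemma ST_ext {n : ℕ} {a b : ℕ → ℕ → ZMod 2} (ha : a ∈ ST n) (hb : b ∈ ST n)
    (h : ∀ j, 1 ≤ j → j ≤ n → a 1 j = b 1 j) : a = b := by
  obtain ⟨ha0, ha1⟩ := ha
  obtain ⟨hb0, hb1⟩ := hb
  have key : ∀ i j, a i j = b i j := by
    intro i
    induction i with
    | zero =>
      intro j
      rw [ha0 0 j (by simp [InTri]), hb0 0 j (by simp [InTri])]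
    | succ i ih =>
      intro j
      by_cases hin : InTri n (i+1) j
      · obtain ⟨h1, h2, h3⟩ := hin
        rcases Nat.eq_zero_or_pos i with hi | hi
        · subst hi; exact h j h2 h3
        · rw [ha1 (i+1) j (by omega) h2 h3, hb1 (i+1) j (by omega) h2 h3]
          simp only [Nat.add_sub_cancel]
          rw [ih (j-1), ih j]
      · rw [ha0 _ _ hin, hb0 _ _ hin]
  funext i j; exact key i j

lemma hrefl_mem_ST {n : ℕ} {a : ℕ → ℕ → ZMod 2} (ha : a ∈ ST n) :
    hrefl n a ∈ ST n := by
  obtain ⟨ha0, ha1⟩ := ha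
  constructor
  · intro i j h; simp [hrefl, h]
  · intro i j h2 hij hjn
    have hin : InTri n i j := ⟨by omega, hij, hjn⟩
    have hin1 : InTri n (i-1) (j-1) := ⟨by omega, by omega, by omega⟩
    have hin2 : InTri n (i-1) j := ⟨by omega, by omega, hjn⟩
    simp only [hrefl, if_pos hin, if_pos hin1, if_pos hin2]
    have e1 : n - (j-1) + (i-1) = n - j + i := by omega
    have e2 : n - j + (i - 1) = (n - j + i) - 1 := by omega
    rw [e1, e2, ha1 i (n - j + i) h2 (by omega) (by omega)]
    ring

lemma tri_mem_HST {n : ℕ} (S : ℕ → ZMod 2) (hS : SymmSeq n S) :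
    (fun i => triRow n S i) ∈ HST n := by
  refine ⟨triRow_mem_ST n S, ?_⟩
  apply ST_ext (hrefl_mem_ST (triRow_mem_ST n S)) (triRow_mem_ST n S)
  intro j h1 h2
  have hin : InTri n 1 j := ⟨le_refl 1, h1, h2⟩
  have hin' : InTri n 1 (n - j + 1) := ⟨le_refl 1, by omega, by omega⟩
  simp only [hrefl, if_pos hin]
  show triRow n S 1 (n - j + 1) = triRow n S 1 j
  simp only [triRow, if_pos hin, if_pos hin']
  exact hS j h1 h2

/-- Extension of a half-sequence to a symmetric sequence. -/
def extSeq (n m : ℕ) (g : ℕ → ZMod 2) : ℕ → ZMod 2 :=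
  fun j => if j ≤ m then g (j-1) else g (n-j)

lemma extSeq_symm (n m : ℕ) (g : ℕ → ZMod 2) (hm : m = (n+1)/2) :
    SymmSeq n (extSeq n m g) := by
  intro j h1 h2
  unfold extSeq
  by_cases hj : n - j + 1 ≤ m
  · rw [if_pos hj]
    by_cases hj2 : j ≤ m
    · rw [if_pos hj2]; congr 1; omega
    · rw [if_neg hj2]; congr 1
  · rw [if_neg hj]
    have hj2 : j ≤ m := by omega
    rw [if_pos hj2]; congr 1; omega

/-- Corollary 13. `dim HST(n) = ⌈n/2⌉`. -/
theorem statement11 (n : ℕ) :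
    Module.finrank (ZMod 2) (HST n) = (n + 1) / 2 := by
  set m := (n+1)/2 with hm
  let φ : HST n →ₗ[ZMod 2] (Fin m → ZMod 2) :=
    { toFun := fun a k => (a : ℕ → ℕ → ZMod 2) 1 ((k : ℕ) + 1)
      map_add' := fun _ _ => rfl
      map_smul' := fun _ _ => rfl }
  have hsym : ∀ (a : HST n) (j : ℕ), 1 ≤ j → j ≤ n →
      (a : ℕ → ℕ → ZMod 2) 1 j = (a : ℕ → ℕ → ZMod 2) 1 (n - j + 1) := by
    intro a j h1 h2
    conv_lhs => rw [← a.2.2]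
    have hin : InTri n 1 j := ⟨le_refl 1, h1, h2⟩
    simp [hrefl, hin]
  have hbij : Function.Bijective φ := by
    constructor
    · intro a b hab
      apply Subtype.ext
      have hrow : ∀ j, 1 ≤ j → j ≤ m →
          (a : ℕ → ℕ → ZMod 2) 1 j = (b : ℕ → ℕ → ZMod 2) 1 j := by
        intro j h1 h2
        have hk : j - 1 < m := by omega
        have h0 : (a : ℕ → ℕ → ZMod 2) 1 (j-1+1) = (b : ℕ → ℕ → ZMod 2) 1 (j-1+1) :=
          congrFun hab ⟨j-1, hk⟩
        rwa [show j - 1 + 1 = j by omega] at h0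
      apply ST_ext a.2.1 b.2.1
      intro j h1 h2
      by_cases hj : j ≤ m
      · exact hrow j h1 hj
      · rw [hsym a j h1 h2, hsym b j h1 h2]
        exact hrow (n - j + 1) (by omega) (by omega)
    · intro f
      set g : ℕ → ZMod 2 := fun k => if h : k < m then f ⟨k, h⟩ else 0 with hg
      set S := extSeq n m g with hS
      refine ⟨⟨fun i => triRow n S i, tri_mem_HST S (extSeq_symm n m g hm)⟩, ?_⟩
      funext k
      show triRow n S 1 ((k : ℕ) + 1) = f k
      have hkm : (k : ℕ) < m := k.2
      have hmn : m ≤ n := by omega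
      have hin : InTri n 1 ((k : ℕ) + 1) := ⟨le_refl 1, by omega, by omega⟩
      simp only [triRow, if_pos hin]
      show extSeq n m g ((k : ℕ) + 1) = f k
      unfold extSeq
      rw [if_pos (by omega : (k : ℕ) + 1 ≤ m)]
      simp only [Nat.add_sub_cancel, hg, dif_pos hkm]
  rw [LinearEquiv.finrank_eq (LinearEquiv.ofBijective φ hbij)]
  simp

end Steinhaus
end
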